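/- Let A be the n×n 0–1 circulant with residue set {a_1, ..., a_k} ⊆ ℤ/nℤ (i.e., A = S^{a_1} + ... + S^{a_k} where S is the cyclic shift). Then the number of times k² occurs as an eigenvalue of A·Aᵀ (with multiplicity) equals gcd(n, g), where g = gcd of all differences a_i − a_j for 1 ≤ i, j ≤ k. -/

import Mathlib

open Polynomial Matrix Finset

section AuxLemmas

variable {ι : Type*} [Fintype ι] [DecidableEq ι]

lemma charpoly_conj_aux (P M Q : Matrix ι ι ℂ) (h : P * Q = 1) :
    (P * M * Q).charpoly = M.charpoly := by
  have h1 : (P.map (C : ℂ →+* ℂ[X])) * (Q.map (C : ℂ →+* ℂ[X])) = 1 := by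
    rw [← Matrix.map_mul, h, Matrix.map_one _ (map_zero C) (map_one C)]
  have hm : charmatrix (P * M * Q)
      = P.map (C : ℂ →+* ℂ[X]) * charmatrix M * Q.map (C : ℂ →+* ℂ[X]) := by
    unfold charmatrix
    rw [RingHom.mapMatrix_apply, RingHom.mapMatrix_apply, mul_sub, sub_mul,
      ← Matrix.map_mul, ← Matrix.map_mul]
    congr 1
    rw [← (scalar_commute (X : ℂ[X]) (fun r' => Commute.all _ _) (P.map C)).eq,
      mul_assoc, h1, mul_one]
  rw [Matrix.charpoly, Matrix.charpoly, hm, det_mul, det_mul, mul_right_comm,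
    ← det_mul, h1, det_one, one_mul]

lemma charpoly_diagonal_aux (d : ι → ℂ) :
    (Matrix.diagonal d).charpoly = ∏ i, (X - C (d i)) := by
  have h : charmatrix (Matrix.diagonal d) = Matrix.diagonal (fun i => X - C (d i)) := by
    ext i j
    by_cases hij : i = j
    · subst hij; simp
    · rw [charmatrix_apply_ne _ _ _ hij, Matrix.diagonal_apply_ne _ hij,
        Matrix.diagonal_apply_ne _ hij, map_zero, neg_zero]
  rw [Matrix.charpoly, h, det_diagonal]

omit [Fintype ι] [DecidableEq ι] in
lemma rootmult_prod (s : Finset ι) (lam : ι → ℂ) (c : ℂ) :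
    (∏ i ∈ s, (X - C (lam i))).rootMultiplicity c = (s.filter (fun i => lam i = c)).card := by
  have h : (∏ i ∈ s, (X - C (lam i)))
      = ((s.val.map lam).map (fun a => X - C a)).prod := by
    rw [Multiset.map_map]; rfl
  rw [← Polynomial.count_roots, h, Polynomial.roots_multiset_prod_X_sub_C,
    Multiset.count_map]
  simp only [eq_comm, Finset.card_def, Finset.filter_val]

end AuxLemmas

section ZModAux

variable {n : ℕ} [NeZero n]

lemma zmod_sum_val (f : ℕ → ℂ) :
    ∑ x : ZMod n, f x.val = ∑ m ∈ Finset.range n, f m := by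
  refine Finset.sum_nbij' (fun x => x.val) (fun m => (m : ZMod n)) ?_ ?_ ?_ ?_ ?_
  · intro a _; exact Finset.mem_range.2 a.val_lt
  · intro a _; exact Finset.mem_univ _
  · intro a _; exact ZMod.natCast_zmod_val a
  · intro a ha; exact ZMod.val_cast_of_lt (Finset.mem_range.1 ha)
  · intro a _; rfl

lemma zmod_count (q : ℕ → Prop) [DecidablePred q] :
    (Finset.univ.filter (fun x : ZMod n => q x.val)).card
      = ((Finset.range n).filter q).card := by
  refine Finset.card_nbij' (fun x => x.val) (fun m => (m : ZMod n)) ?_ ?_ ?_ ?_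
  · intro a ha
    simp only [Finset.mem_coe, Finset.mem_filter, Finset.mem_range] at *
    exact ⟨a.val_lt, ha.2⟩
  · intro a ha
    simp only [Finset.mem_coe, Finset.mem_filter, Finset.mem_range] at *
    exact ⟨Finset.mem_univ _, by rw [ZMod.val_cast_of_lt ha.1]; exact ha.2⟩
  · intro a _; exact ZMod.natCast_zmod_val a
  · intro a ha
    simp only [Finset.mem_coe, Finset.mem_filter, Finset.mem_range] at ha
    exact ZMod.val_cast_of_lt ha.1

omit [NeZero n] in
lemma count_multiples {m d : ℕ} (hm : 0 < m) (hmd : m * d = n) :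
    ((Finset.range n).filter (fun x => m ∣ x)).card = d := by
  have himg : (Finset.range n).filter (fun x => m ∣ x)
      = (Finset.range d).image (fun c => c * m) := by
    ext x
    simp only [Finset.mem_filter, Finset.mem_range, Finset.mem_image]
    constructor
    · rintro ⟨hx, c, rfl⟩
      refine ⟨c, ?_, (mul_comm c m)⟩
      rw [← hmd] at hx
      exact lt_of_mul_lt_mul_left hx (Nat.zero_le m)
    · rintro ⟨c, hc, rfl⟩
      refine ⟨?_, Dvd.intro c (mul_comm m c)⟩
      rw [← hmd]
      calc c * m = m * c := mul_comm c m
        _ < m * d := (Nat.mul_lt_mul_left hm).2 hc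
  rw [himg, Finset.card_image_of_injective _ (fun a b hab => Nat.eq_of_mul_eq_mul_right hm hab),
    Finset.card_range]

end ZModAux

/-- The multiplicity of `k²` as an eigenvalue of `A Aᵀ`, for `A` the 0–1
circulant with residue set `𝒜` of size `k`, equals `gcd(n, g)` where `g`
is the gcd of all differences of elements of `𝒜`. -/
theorem eigenvalue_ksq_multiplicity (n : ℕ) [NeZero n] (𝒜 : Finset (ZMod n))
    (A : Matrix (ZMod n) (ZMod n) ℂ)
    (hA : ∀ i j : ZMod n, A i j = if (j - i) ∈ 𝒜 then 1 else 0) :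
    ((A * A.transpose).charpoly).rootMultiplicity ((𝒜.card : ℂ) ^ 2)
      = Nat.gcd n (Finset.gcd (𝒜 ×ˢ 𝒜) fun p => (p.1 - p.2).val) := by
  classical
  have hn : n ≠ 0 := NeZero.ne n
  have hnpos : 0 < n := Nat.pos_of_ne_zero hn
  set g : ℕ := Finset.gcd (𝒜 ×ˢ 𝒜) (fun p => (p.1 - p.2).val) with hgdef
  -- the primitive root and the character e
  set ζ : ℂ := Complex.exp (2 * Real.pi * Complex.I / n) with hζdef
  have hζ : IsPrimitiveRoot ζ n := Complex.isPrimitiveRoot_exp n hn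
  have hζn : ζ ^ n = 1 := hζ.pow_eq_one
  have hpow : ∀ m : ℕ, ζ ^ (m % n) = ζ ^ m := by
    intro m
    conv_rhs => rw [← Nat.mod_add_div m n]
    rw [pow_add, pow_mul, hζn, one_pow, mul_one]
  set e : ZMod n → ℂ := fun x => ζ ^ x.val with he
  have he_add : ∀ x y : ZMod n, e (x + y) = e x * e y := by
    intro x y
    show ζ ^ (x + y).val = ζ ^ x.val * ζ ^ y.val
    rw [ZMod.val_add, hpow, pow_add]
  have he_zero : e (0 : ZMod n) = 1 := by
    show ζ ^ (0 : ZMod n).val = 1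
    rw [ZMod.val_zero, pow_zero]
  have he_inv : ∀ x : ZMod n, e x * e (-x) = 1 := by
    intro x; rw [← he_add, add_neg_cancel, he_zero]
  have he_sub : ∀ x y : ZMod n, e (x - y) = e x * e (-y) := by
    intro x y
    have h1 : e (x - y) * e y = e x := by rw [← he_add, sub_add_cancel]
    calc e (x - y) = e (x - y) * (e y * e (-y)) := by rw [he_inv, mul_one]
      _ = (e (x - y) * e y) * e (-y) := by ring
      _ = e x * e (-y) := by rw [h1]
  have he_one_iff : ∀ x : ZMod n, e x = 1 ↔ x = 0 := by
    intro x
    constructor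
    · intro hx
      have hd : n ∣ x.val := (hζ.pow_eq_one_iff_dvd x.val).1 hx
      have hv : x.val = 0 := Nat.eq_zero_of_dvd_of_lt hd x.val_lt
      exact (ZMod.val_eq_zero x).1 hv
    · rintro rfl; exact he_zero
  have he_pow_n : ∀ x : ZMod n, (e x) ^ n = 1 := by
    intro x
    show (ζ ^ x.val) ^ n = 1
    rw [← pow_mul, mul_comm, pow_mul, hζn, one_pow]
  have he_abs : ∀ x : ZMod n, ‖e x‖ = 1 := by
    intro x
    have := Complex.norm_eq_one_of_pow_eq_one (he_pow_n x) hn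
    exact this
  -- geometric sum
  have hsum : ∀ c : ZMod n, c ≠ 0 → ∑ l : ZMod n, e (l * c) = 0 := by
    intro c hc
    have h1 : ∀ l : ZMod n, e (l * c) = (e c) ^ l.val := by
      intro l
      show ζ ^ (l * c).val = (ζ ^ c.val) ^ l.val
      rw [ZMod.val_mul, hpow, mul_comm, pow_mul]
    rw [Finset.sum_congr rfl (fun l _ => h1 l), zmod_sum_val (fun m => (e c) ^ m),
      geom_sum_eq (fun h => hc ((he_one_iff c).1 h)) n, he_pow_n, sub_self, zero_div]
  -- the DFT matrix
  set W : Matrix (ZMod n) (ZMod n) ℂ := Matrix.of (fun i j => e (i * j)) with hWdef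
  set W' : Matrix (ZMod n) (ZMod n) ℂ := Matrix.of (fun i j => e (-(i * j))) with hW'def
  have hWW' : W * W' = (n : ℂ) • 1 := by
    ext i j
    rw [Matrix.mul_apply]
    have hterm : ∀ l, W i l * W' l j = e (l * (i - j)) := by
      intro l
      show e (i * l) * e (-(l * j)) = e (l * (i - j))
      rw [mul_sub, he_sub (l * i) (l * j), mul_comm i l]
    rw [Finset.sum_congr rfl (fun l _ => hterm l)]
    by_cases hij : i = j
    · subst hij
      simp only [sub_self, mul_zero, he_zero, Finset.sum_const, Finset.card_univ, ZMod.card,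
        nsmul_eq_mul, mul_one, Matrix.smul_apply, Matrix.one_apply_eq, smul_eq_mul]
    · rw [hsum (i - j) (sub_ne_zero.2 hij), Matrix.smul_apply, Matrix.one_apply_ne hij,
        smul_zero]
  have hnC : (n : ℂ) ≠ 0 := Nat.cast_ne_zero.2 hn
  set Q : Matrix (ZMod n) (ZMod n) ℂ := (n : ℂ)⁻¹ • W' with hQdef
  have hWQ : W * Q = 1 := by
    rw [hQdef, Matrix.mul_smul, hWW', smul_smul, inv_mul_cancel₀ hnC, one_smul]
  -- eigenvalue functions
  set f : ZMod n → ℂ := fun r => ∑ a ∈ 𝒜, e (a * r) with hfdef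
  set f' : ZMod n → ℂ := fun r => ∑ a ∈ 𝒜, e (-(a * r)) with hf'def
  have hAW : A * W = W * Matrix.diagonal f := by
    ext i j
    rw [Matrix.mul_apply, Matrix.mul_diagonal]
    calc ∑ l, A i l * W l j = ∑ l, (if l - i ∈ 𝒜 then e (l * j) else 0) := by
          refine Finset.sum_congr rfl fun l _ => ?_
          rw [hA i l, ite_mul, one_mul, zero_mul]; rfl
      _ = ∑ a : ZMod n, (if (i + a) - i ∈ 𝒜 then e ((i + a) * j) else 0) :=
          (Fintype.sum_equiv (Equiv.addLeft i) _ _ (fun a => rfl)).symm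
      _ = ∑ a : ZMod n, (if a ∈ 𝒜 then e (i * j) * e (a * j) else 0) := by
          refine Finset.sum_congr rfl fun a _ => ?_
          rw [add_sub_cancel_left, add_mul, he_add]
      _ = ∑ a ∈ 𝒜, e (i * j) * e (a * j) := by
          rw [Finset.sum_ite_mem, Finset.univ_inter]
      _ = W i j * f j := by rw [← Finset.mul_sum]; rfl
  have hATW : A.transpose * W = W * Matrix.diagonal f' := by
    ext i j
    rw [Matrix.mul_apply, Matrix.mul_diagonal]
    calc ∑ l, A.transpose i l * W l j = ∑ l, (if i - l ∈ 𝒜 then e (l * j) else 0) := by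
          refine Finset.sum_congr rfl fun l _ => ?_
          rw [Matrix.transpose_apply, hA l i, ite_mul, one_mul, zero_mul]; rfl
      _ = ∑ a : ZMod n, (if i - (i - a) ∈ 𝒜 then e ((i - a) * j) else 0) :=
          (Fintype.sum_equiv (Equiv.subLeft i) _ _ (fun a => rfl)).symm
      _ = ∑ a : ZMod n, (if a ∈ 𝒜 then e (i * j) * e (-(a * j)) else 0) := by
          refine Finset.sum_congr rfl fun a _ => ?_
          rw [sub_sub_cancel, sub_mul, he_sub]
      _ = ∑ a ∈ 𝒜, e (i * j) * e (-(a * j)) := by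
          rw [Finset.sum_ite_mem, Finset.univ_inter]
      _ = W i j * f' j := by rw [← Finset.mul_sum]; rfl
  have hBW : A * A.transpose * W = W * Matrix.diagonal (fun r => f r * f' r) := by
    rw [mul_assoc, hATW, ← mul_assoc, hAW, mul_assoc, Matrix.diagonal_mul_diagonal]
  have hB : A * A.transpose = W * Matrix.diagonal (fun r => f r * f' r) * Q := by
    calc A * A.transpose = (A * A.transpose) * (W * Q) := by rw [hWQ, mul_one]
      _ = (A * A.transpose * W) * Q := by rw [← mul_assoc]
      _ = _ := by rw [hBW]
  rw [hB, charpoly_conj_aux _ _ _ hWQ, charpoly_diagonal_aux,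
    rootmult_prod Finset.univ (fun r => f r * f' r) ((𝒜.card : ℂ) ^ 2)]
  -- characterize the eigenvalue condition
  have hprod : ∀ r : ZMod n, f r * f' r = ∑ p ∈ 𝒜 ×ˢ 𝒜, e ((p.1 - p.2) * r) := by
    intro r
    rw [hfdef, hf'def]
    show (∑ a ∈ 𝒜, e (a * r)) * (∑ a ∈ 𝒜, e (-(a * r))) = _
    rw [Finset.sum_mul_sum, Finset.sum_product]
    refine Finset.sum_congr rfl fun p _ => Finset.sum_congr rfl fun q _ => ?_
    rw [sub_mul, he_sub]
  have hstepA : ∀ r : ZMod n,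
      (f r * f' r = ((𝒜.card : ℂ)) ^ 2 ↔ ∀ p ∈ 𝒜 ×ˢ 𝒜, e ((p.1 - p.2) * r) = 1) := by
    intro r
    rw [hprod r]
    constructor
    · intro hsumeq p hp
      by_contra hne
      have hre_le : ∀ q ∈ 𝒜 ×ˢ 𝒜, (e ((q.1 - q.2) * r)).re ≤ 1 := by
        intro q _
        calc (e ((q.1 - q.2) * r)).re ≤ ‖e ((q.1 - q.2) * r)‖ :=
              Complex.re_le_norm _
          _ = 1 := he_abs _
      have hre_lt : (e ((p.1 - p.2) * r)).re < 1 := by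
        rcases lt_or_eq_of_le (hre_le p hp) with h | h
        · exact h
        · exfalso
          apply hne
          have habs := he_abs ((p.1 - p.2) * r)
          have h2 : (e ((p.1 - p.2) * r)).re ^ 2 + (e ((p.1 - p.2) * r)).im ^ 2 = 1 := by
            have hsq := Complex.sq_norm (e ((p.1 - p.2) * r))
            rw [habs] at hsq
            simpa [Complex.normSq_apply, sq] using hsq.symm
          have him : (e ((p.1 - p.2) * r)).im = 0 := by nlinarith [sq_nonneg (e ((p.1 - p.2) * r)).im]
          exact Complex.ext (by rw [h]; rfl) (by rw [him]; rfl)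
      have hlt : (∑ q ∈ 𝒜 ×ˢ 𝒜, e ((q.1 - q.2) * r)).re < ((𝒜 ×ˢ 𝒜).card : ℝ) := by
        rw [Complex.re_sum]
        calc ∑ q ∈ 𝒜 ×ˢ 𝒜, (e ((q.1 - q.2) * r)).re
            < ∑ _q ∈ 𝒜 ×ˢ 𝒜, (1 : ℝ) := Finset.sum_lt_sum hre_le ⟨p, hp, hre_lt⟩
          _ = ((𝒜 ×ˢ 𝒜).card : ℝ) := by rw [Finset.sum_const, nsmul_eq_mul, mul_one]
      rw [hsumeq] at hlt
      have : (((𝒜.card : ℂ)) ^ 2).re = ((𝒜 ×ˢ 𝒜).card : ℝ) := by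
        rw [Finset.card_product,
          show ((𝒜.card : ℂ)) ^ 2 = ((𝒜.card * 𝒜.card : ℕ) : ℂ) by push_cast; ring,
          Complex.natCast_re]
      rw [this] at hlt
      exact lt_irrefl _ hlt
    · intro hall
      rw [Finset.sum_congr rfl hall, Finset.sum_const, Finset.card_product, nsmul_eq_mul,
        mul_one]
      push_cast
      ring
  have hstepC : ∀ r : ZMod n,
      ((∀ p ∈ 𝒜 ×ˢ 𝒜, e ((p.1 - p.2) * r) = 1) ↔ n ∣ r.val * g) := by
    intro r
    constructor
    · intro h
      have hdvd : ∀ p ∈ 𝒜 ×ˢ 𝒜, n ∣ r.val * (p.1 - p.2).val := by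
        intro p hp
        have h0 : (p.1 - p.2) * r = 0 := (he_one_iff _).1 (h p hp)
        have h1 : ((r.val * (p.1 - p.2).val : ℕ) : ZMod n) = 0 := by
          push_cast [ZMod.natCast_zmod_val]
          rw [mul_comm]
          exact h0
        exact (ZMod.natCast_eq_zero_iff _ n).1 h1
      have hmul : Finset.gcd (𝒜 ×ˢ 𝒜) (fun p => r.val * (p.1 - p.2).val) = r.val * g := by
        rw [hgdef, Finset.gcd_mul_left]
        simp
      rw [← hmul]
      exact Finset.dvd_gcd hdvd
    · intro hng p hp
      have h1 : g ∣ (p.1 - p.2).val := by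
        rw [hgdef]; exact Finset.gcd_dvd hp
      have h2 : n ∣ r.val * (p.1 - p.2).val := hng.trans (mul_dvd_mul_left _ h1)
      have h3 : ((r.val * (p.1 - p.2).val : ℕ) : ZMod n) = 0 :=
        (ZMod.natCast_eq_zero_iff _ n).2 h2
      have h4 : (p.1 - p.2) * r = 0 := by
        push_cast [ZMod.natCast_zmod_val] at h3
        rw [mul_comm]
        exact h3
      exact (he_one_iff _).2 h4
  -- divisibility count
  set d : ℕ := Nat.gcd n g with hddef
  have hd : 0 < d := Nat.gcd_pos_of_pos_left g hnpos
  set m' : ℕ := n / d with hm'def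
  have hm'pos : 0 < m' := Nat.div_pos (Nat.le_of_dvd hnpos (Nat.gcd_dvd_left n g)) hd
  have hn' : n = d * m' := (Nat.mul_div_cancel' (Nat.gcd_dvd_left n g)).symm
  set g' : ℕ := g / d with hg'def
  have hg' : g = d * g' := (Nat.mul_div_cancel' (Nat.gcd_dvd_right n g)).symm
  have hcop : Nat.Coprime m' g' := Nat.coprime_div_gcd_div_gcd hd
  have hdiv_iff : ∀ v : ℕ, (n ∣ v * g ↔ m' ∣ v) := by
    intro v
    constructor
    · intro h
      rw [hn', hg'] at h
      have h2 : d * m' ∣ d * (v * g') := by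
        rwa [show v * (d * g') = d * (v * g') by ring] at h
      exact hcop.dvd_of_dvd_mul_right ((Nat.mul_dvd_mul_iff_left hd).1 h2)
    · intro h
      rw [hn', hg', show v * (d * g') = d * (v * g') by ring]
      exact Nat.mul_dvd_mul_left d (h.mul_right g')
  have hfilter : (Finset.univ.filter (fun r : ZMod n => f r * f' r = ((𝒜.card : ℂ)) ^ 2))
      = (Finset.univ.filter (fun r : ZMod n => m' ∣ r.val)) := by
    apply Finset.filter_congr
    intro r _
    rw [hstepA r, ← hdiv_iff r.val, ← hstepC r]
  rw [hfilter, zmod_count (fun v => m' ∣ v), count_multiples hm'pos (by rw [mul_comm]; exact hn'.symm)]
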